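/- Let N be a positive integer, r a nonzero rational number, L = (1+rq)^{1/N} ∈ ℚ[[q]] the binomial series, X = 1 − L^{−N}, and let D_L = zD + L acting ℚ[z]-linearly on ℚ[[q]][z] (with D = q·d/dq extended z-linearly and L acting by multiplication). For every n ≥ 0 there exist polynomials c^{(n)}_{m,j} ∈ ℚ[x] for 0 ≤ j ≤ m ≤ n such that D_L^n = Σ_{m=0}^{n} z^m·L^{n−m}·Σ_{j=0}^{m} c^{(n)}_{m,j}(X)·D^{m−j} as operators on ℚ[[q]][z], where c^{(n)}_{m,0} = C(n,m) is the binomial coefficient and, for j ≥ 1, c^{(n)}_{m,j}(x) is divisible by x and has degree at most j. -/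

import Mathlib

/-!
Statement 16: let N ≥ 1, r ∈ ℚ nonzero, L = (1+rq)^{1/N}, X = 1 − L^{−N}, and
D_L = zD + L acting ℚ[z]-linearly on ℚ[[q]][z]. For every n ≥ 0 there are polynomials
c^{(n)}_{m,j} ∈ ℚ[x] (0 ≤ j ≤ m ≤ n) with
D_L^n = Σ_{m=0}^{n} z^m·L^{n−m}·Σ_{j=0}^{m} c^{(n)}_{m,j}(X)·D^{m−j},
c^{(n)}_{m,0} = C(n,m), and for j ≥ 1, x ∣ c^{(n)}_{m,j} and deg c^{(n)}_{m,j} ≤ j.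
-/

open PowerSeries Finset

noncomputable section

/-- The derivation D = q·d/dq on ℚ[[q]]. -/
def Dq (f : PowerSeries ℚ) : PowerSeries ℚ :=
  PowerSeries.mk fun n => (n : ℚ) * PowerSeries.coeff n f

/-- The generalized binomial coefficient C(s,n) = s(s−1)⋯(s−n+1)/n!. -/
def gbinom (s : ℚ) (n : ℕ) : ℚ :=
  (∏ j ∈ range n, (s - (j : ℚ))) / (n.factorial : ℚ)

/-- L^s = (1+rq)^{s/N} = Σ_{n≥0} C(s/N,n)(rq)ⁿ. -/
def Lpow (N : ℕ) (r : ℚ) (s : ℚ) : PowerSeries ℚ :=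
  PowerSeries.mk fun n => gbinom (s / (N : ℚ)) n * r ^ n

/-- X = 1 − L^{−N}. -/
def Xser (N : ℕ) (r : ℚ) : PowerSeries ℚ := 1 - Lpow N r (-(N : ℚ))

/-- The z-linear extension of D to ℚ[[q]][z], applying D to each coefficient. -/
def Dz (p : Polynomial (PowerSeries ℚ)) : Polynomial (PowerSeries ℚ) :=
  p.sum fun i c => Polynomial.monomial i (Dq c)

/-- The operator D_L = zD + L on ℚ[[q]][z]. -/
def DL (N : ℕ) (r : ℚ) (p : Polynomial (PowerSeries ℚ)) : Polynomial (PowerSeries ℚ) :=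
  Polynomial.X * Dz p + Polynomial.C (Lpow N r 1) * p


lemma coeff_Dq (n : ℕ) (f : PowerSeries ℚ) :
    PowerSeries.coeff n (Dq f) = (n : ℚ) * PowerSeries.coeff n f := by
  simp [Dq]

lemma Dq_add (f g : PowerSeries ℚ) : Dq (f + g) = Dq f + Dq g := by
  ext n; simp [coeff_Dq]; ring

lemma Dq_zero : Dq 0 = 0 := by ext n; simp [coeff_Dq]

lemma Dq_one : Dq 1 = 0 := by
  ext n
  simp only [coeff_Dq, PowerSeries.coeff_one, map_zero]
  rcases eq_or_ne n 0 with h | h <;> simp [h]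

lemma Dq_neg (f : PowerSeries ℚ) : Dq (-f) = -Dq f := by
  ext n; simp [coeff_Dq]

lemma Dq_sub (f g : PowerSeries ℚ) : Dq (f - g) = Dq f - Dq g := by
  ext n; simp [coeff_Dq]; ring

lemma Dq_mul (f g : PowerSeries ℚ) : Dq (f * g) = Dq f * g + f * Dq g := by
  ext n
  simp only [coeff_Dq, map_add, PowerSeries.coeff_mul, Finset.mul_sum, ← Finset.sum_add_distrib]
  refine Finset.sum_congr rfl ?_
  rintro ⟨i, j⟩ hij
  replace hij : i + j = n := by simpa using hij
  simp only [coeff_Dq, ← hij]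
  push_cast
  ring

lemma Dq_C (a : ℚ) : Dq (PowerSeries.C a) = 0 := by
  ext n; simp [coeff_Dq, PowerSeries.coeff_C]
  intro h; simp [h]

lemma gbinom_succ (a : ℚ) (n : ℕ) :
    ((n : ℚ) + 1) * gbinom a (n + 1) = (a - n) * gbinom a n := by
  have h1 : (n.factorial : ℚ) ≠ 0 := Nat.cast_ne_zero.mpr n.factorial_ne_zero
  have h2 : ((n+1).factorial : ℚ) ≠ 0 := Nat.cast_ne_zero.mpr (n+1).factorial_ne_zero
  simp only [gbinom, Finset.prod_range_succ, Nat.factorial_succ]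
  field_simp
  push_cast
  ring


lemma coeff_Lpow (N : ℕ) (r s : ℚ) (n : ℕ) :
    PowerSeries.coeff n (Lpow N r s) = gbinom (s / (N : ℚ)) n * r ^ n := by
  simp [Lpow]

lemma Lpow_ode (N : ℕ) (r s : ℚ) :
    (1 + PowerSeries.C r * PowerSeries.X) * Dq (Lpow N r s)
      = PowerSeries.C (s / (N:ℚ) * r) * (PowerSeries.X * Lpow N r s) := by
  ext n
  rcases n with _ | n
  · simp [PowerSeries.coeff_zero_eq_constantCoeff, coeff_Dq, Dq]
  · rw [add_mul, one_mul, mul_assoc, map_add, PowerSeries.coeff_C_mul,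
      PowerSeries.coeff_C_mul, PowerSeries.coeff_succ_X_mul, PowerSeries.coeff_succ_X_mul,
      coeff_Dq, coeff_Dq, coeff_Lpow, coeff_Lpow]
    push_cast
    linear_combination (r ^ (n+1)) * gbinom_succ (s / (N:ℚ)) n


lemma gbinom_neg_one (n : ℕ) : gbinom (-1) n = (-1) ^ n := by
  induction n with
  | zero => simp [gbinom]
  | succ k ih =>
      have h := gbinom_succ (-1) k
      rw [ih] at h
      have hk : ((k:ℚ) + 1) ≠ 0 := by positivity
      exact mul_left_cancel₀ hk (by rw [h]; ring)

section
variable (N : ℕ) (hN : 1 ≤ N) (r : ℚ)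

lemma neg_N_div (hN : 1 ≤ N) : (-(N:ℚ)) / (N:ℚ) = -1 := by
  have : (N:ℚ) ≠ 0 := by positivity
  field_simp

lemma coeff_V (hN : 1 ≤ N) (n : ℕ) :
    PowerSeries.coeff n (Lpow N r (-(N:ℚ))) = (-r) ^ n := by
  rw [coeff_Lpow, neg_N_div N hN, gbinom_neg_one]
  ring

lemma UV (hN : 1 ≤ N) :
    (1 + PowerSeries.C r * PowerSeries.X) * Lpow N r (-(N:ℚ)) = 1 := by
  ext n
  rcases n with _ | n
  · simp [PowerSeries.coeff_zero_eq_constantCoeff, Lpow, gbinom]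
  · rw [add_mul, one_mul, mul_assoc, map_add, PowerSeries.coeff_C_mul,
      PowerSeries.coeff_succ_X_mul, coeff_V N r hN, coeff_V N r hN,
      PowerSeries.coeff_one]
    simp only [Nat.succ_ne_zero, if_false]
    ring

lemma Xser_eq (hN : 1 ≤ N) :
    Xser N r = PowerSeries.C r * (PowerSeries.X * Lpow N r (-(N:ℚ))) := by
  ext n
  rcases n with _ | n
  · simp [Xser, PowerSeries.coeff_zero_eq_constantCoeff, Lpow, gbinom]
  · rw [Xser, map_sub, PowerSeries.coeff_C_mul, PowerSeries.coeff_succ_X_mul,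
      coeff_V N r hN, coeff_V N r hN, PowerSeries.coeff_one]
    simp only [Nat.succ_ne_zero, if_false]
    ring

lemma Dq_L (hN : 1 ≤ N) :
    Dq (Lpow N r 1) = PowerSeries.C (1/(N:ℚ)) * (Xser N r * Lpow N r 1) := by
  have hode := Lpow_ode N r 1
  calc Dq (Lpow N r 1)
      = ((1 + PowerSeries.C r * PowerSeries.X) * Lpow N r (-(N:ℚ))) * Dq (Lpow N r 1) := by
        rw [UV N r hN, one_mul]
    _ = Lpow N r (-(N:ℚ)) * ((1 + PowerSeries.C r * PowerSeries.X) * Dq (Lpow N r 1)) := by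
        ring
    _ = Lpow N r (-(N:ℚ)) * (PowerSeries.C (1/(N:ℚ) * r) * (PowerSeries.X * Lpow N r 1)) := by
        rw [hode]
    _ = PowerSeries.C (1/(N:ℚ)) * (Xser N r * Lpow N r 1) := by
        rw [Xser_eq N r hN, map_mul]; ring

lemma Dq_Xser (hN : 1 ≤ N) :
    Dq (Xser N r) = Xser N r * (1 - Xser N r) := by
  have hode := Lpow_ode N r (-(N:ℚ))
  rw [neg_N_div N hN] at hode
  have hV : Dq (Lpow N r (-(N:ℚ))) = -(Xser N r * Lpow N r (-(N:ℚ))) := by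
    calc Dq (Lpow N r (-(N:ℚ)))
        = ((1 + PowerSeries.C r * PowerSeries.X) * Lpow N r (-(N:ℚ))) *
            Dq (Lpow N r (-(N:ℚ))) := by rw [UV N r hN, one_mul]
      _ = Lpow N r (-(N:ℚ)) *
            ((1 + PowerSeries.C r * PowerSeries.X) * Dq (Lpow N r (-(N:ℚ)))) := by ring
      _ = Lpow N r (-(N:ℚ)) *
            (PowerSeries.C (-1 * r) * (PowerSeries.X * Lpow N r (-(N:ℚ)))) := by rw [hode]
      _ = -(Xser N r * Lpow N r (-(N:ℚ))) := by
          rw [Xser_eq N r hN]; simp only [map_mul, map_neg, map_one]; ring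
  have hXd : Xser N r = 1 - Lpow N r (-(N:ℚ)) := rfl
  have hVX : Lpow N r (-(N:ℚ)) = 1 - Xser N r := by rw [hXd]; ring
  rw [hXd, Dq_sub, Dq_one, hV, hVX]
  ring

end


lemma Dq_aeval (g : PowerSeries ℚ) (c : Polynomial ℚ) :
    Dq (Polynomial.aeval g c) = Polynomial.aeval g c.derivative * Dq g := by
  induction c using Polynomial.induction_on with
  | C a =>
      have : (algebraMap ℚ (PowerSeries ℚ)) a = PowerSeries.C a := rfl
      rw [Polynomial.aeval_C, this, Dq_C, Polynomial.derivative_C, map_zero, zero_mul]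
  | add p q hp hq => rw [map_add, Dq_add, hp, hq, Polynomial.derivative_add, map_add]; ring
  | monomial k a h =>
      rw [show (Polynomial.C a * Polynomial.X ^ (k + 1))
          = (Polynomial.C a * Polynomial.X ^ k) * Polynomial.X from by ring]
      rw [Polynomial.derivative_mul (f := Polynomial.C a * Polynomial.X ^ k),
        Polynomial.derivative_X, mul_one,
        map_mul (Polynomial.aeval g) (Polynomial.C a * Polynomial.X ^ k) Polynomial.X,
        Dq_mul, h, Polynomial.aeval_X, map_add,
        map_mul (Polynomial.aeval g)
          (Polynomial.derivative (Polynomial.C a * Polynomial.X ^ k)) Polynomial.X,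
        Polynomial.aeval_X]
      ring

lemma Dq_L_pow (N : ℕ) (hN : 1 ≤ N) (r : ℚ) (k : ℕ) :
    Dq (Lpow N r 1 ^ k) =
      PowerSeries.C ((k:ℚ)/(N:ℚ)) * (Xser N r * Lpow N r 1 ^ k) := by
  induction k with
  | zero => simp [Dq_one]
  | succ k ih =>
      rw [pow_succ, Dq_mul, ih, Dq_L N r hN]
      rw [show ((k+1 : ℕ):ℚ)/(N:ℚ) = (k:ℚ)/(N:ℚ) + 1/(N:ℚ) from by push_cast; ring, map_add]
      ring


def cpoly (N : ℕ) : ℕ → ℕ → ℕ → Polynomial ℚ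
  | 0, 0, 0 => 1
  | 0, _, _ => 0
  | (n+1), 0, j => cpoly N n 0 j
  | (n+1), (m+1), 0 => cpoly N n (m+1) 0 + cpoly N n m 0
  | (n+1), (m+1), (j+1) => cpoly N n (m+1) (j+1) + cpoly N n m (j+1)
      + Polynomial.C (((n:ℚ) - (m:ℚ))/(N:ℚ)) * (Polynomial.X * cpoly N n m j)
      + Polynomial.X * (1 - Polynomial.X) * (cpoly N n m j).derivative

lemma cpoly_j_gt (N : ℕ) : ∀ n m j : ℕ, m < j → cpoly N n m j = 0 := by
  intro n
  induction n with
  | zero =>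
      rintro m j h
      rcases m with _ | m <;> rcases j with _ | j <;> simp_all [cpoly]
  | succ n ih =>
      rintro (_ | m) (_ | j) h
      · omega
      · simp only [cpoly]; exact ih 0 (j+1) h
      · omega
      · simp only [cpoly]
        rw [ih (m+1) (j+1) (by omega), ih m (j+1) (by omega), ih m j (by omega)]
        simp

lemma cpoly_m_gt (N : ℕ) : ∀ n m j : ℕ, n < m → cpoly N n m j = 0 := by
  intro n
  induction n with
  | zero =>
      rintro m j h
      rcases m with _ | m <;> rcases j with _ | j <;> simp_all [cpoly]
  | succ n ih =>
      rintro (_ | m) (_ | j) h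
      · omega
      · omega
      · simp only [cpoly]
        rw [ih (m+1) 0 (by omega), ih m 0 (by omega)]
        simp
      · simp only [cpoly]
        rw [ih (m+1) (j+1) (by omega), ih m (j+1) (by omega), ih m j (by omega)]
        simp

lemma cpoly_zero_right (N : ℕ) : ∀ n m : ℕ, cpoly N n m 0 = Polynomial.C ((n.choose m : ℕ) : ℚ) := by
  intro n
  induction n with
  | zero =>
      rintro (_ | m)
      · simp [cpoly]
      · simp [cpoly]
  | succ n ih =>
      rintro (_ | m)
      · simp [cpoly, ih 0]
      · simp only [cpoly, ih (m+1), ih m, Nat.choose_succ_succ]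
        push_cast
        rw [map_add]
        ring


lemma cpoly_prop (N : ℕ) : ∀ n m j : ℕ,
    (cpoly N n m j).natDegree ≤ j ∧ (1 ≤ j → Polynomial.X ∣ cpoly N n m j) := by
  intro n
  induction n with
  | zero =>
      intro m j
      rcases j with _ | j
      · refine ⟨?_, by omega⟩
        rw [cpoly_zero_right]
        simp
      · rcases m with _ | m
        · rw [cpoly_j_gt N 0 0 (j+1) (by omega)]
          simp
        · rw [cpoly_m_gt N 0 (m+1) (j+1) (by omega)]
          simp
  | succ n ih =>
      rintro (_ | m) (_ | j)
      · refine ⟨?_, by omega⟩; rw [cpoly_zero_right]; simp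
      · simp only [cpoly]; exact ih 0 (j+1)
      · refine ⟨?_, by omega⟩; rw [cpoly_zero_right]; simp
      · simp only [cpoly]
        obtain ⟨hd1, hv1⟩ := ih (m+1) (j+1)
        obtain ⟨hd2, hv2⟩ := ih m (j+1)
        obtain ⟨hd3, _⟩ := ih m j
        have hXc : (Polynomial.X * cpoly N n m j).natDegree ≤ 1 + j := by
          refine le_trans (Polynomial.natDegree_mul_le) ?_
          rw [Polynomial.natDegree_X]
          omega
        have b3 : (Polynomial.C (((n:ℚ) - (m:ℚ))/(N:ℚ)) *
            (Polynomial.X * cpoly N n m j)).natDegree ≤ j + 1 := by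
          refine le_trans (Polynomial.natDegree_mul_le) ?_
          rw [Polynomial.natDegree_C]
          omega
        have hX1X : (Polynomial.X * (1 - Polynomial.X) : Polynomial ℚ).natDegree ≤ 2 := by
          refine le_trans (Polynomial.natDegree_mul_le) ?_
          rw [Polynomial.natDegree_X]
          have : (1 - Polynomial.X : Polynomial ℚ).natDegree ≤ 1 :=
            le_trans (Polynomial.natDegree_sub_le _ _)
              (by simp [Polynomial.natDegree_one, Polynomial.natDegree_X])
          omega
        have b4 : (Polynomial.X * (1 - Polynomial.X) *
            (cpoly N n m j).derivative).natDegree ≤ j + 1 := by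
          rcases Nat.eq_zero_or_pos j with hj | hj
          · have hder : (cpoly N n m j).derivative = 0 := by
              rw [hj, cpoly_zero_right]; simp
            rw [hder, mul_zero]
            simp
          · have hde : (cpoly N n m j).derivative.natDegree ≤ j - 1 :=
              le_trans (Polynomial.natDegree_derivative_le _) (by omega)
            refine le_trans (Polynomial.natDegree_mul_le) ?_
            omega
        constructor
        · refine le_trans (Polynomial.natDegree_add_le _ _)
            (max_le (le_trans (Polynomial.natDegree_add_le _ _)
              (max_le (le_trans (Polynomial.natDegree_add_le _ _)
                (max_le hd1 hd2)) b3)) b4)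
        · intro _
          refine dvd_add (dvd_add (dvd_add (hv1 (by omega)) (hv2 (by omega)))
            ⟨Polynomial.C (((n:ℚ) - (m:ℚ))/(N:ℚ)) * cpoly N n m j, by ring⟩)
            ⟨(1 - Polynomial.X) * (cpoly N n m j).derivative, by ring⟩


lemma Dz_coeff (p : Polynomial (PowerSeries ℚ)) (k : ℕ) :
    (Dz p).coeff k = Dq (p.coeff k) := by
  rw [Dz, Polynomial.sum_def, Polynomial.finset_sum_coeff]
  simp only [Polynomial.coeff_monomial]
  rw [Finset.sum_ite_eq' p.support k fun i => Dq (p.coeff i)]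
  split_ifs with h
  · rfl
  · rw [Polynomial.notMem_support_iff.mp h, Dq_zero]

lemma Dz_add (p q : Polynomial (PowerSeries ℚ)) : Dz (p + q) = Dz p + Dz q := by
  ext k
  simp [Dz_coeff, Dq_add]

lemma Dz_C_mul (f : PowerSeries ℚ) (q : Polynomial (PowerSeries ℚ)) :
    Dz (Polynomial.C f * q) = Polynomial.C (Dq f) * q + Polynomial.C f * Dz q := by
  ext k
  simp [Dz_coeff, Polynomial.coeff_C_mul, Dq_mul]

lemma Dz_X_mul (q : Polynomial (PowerSeries ℚ)) :
    Dz (Polynomial.X * q) = Polynomial.X * Dz q := by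
  ext k
  rcases k with _ | k
  · simp [Dz_coeff, Polynomial.mul_coeff_zero, Dq_zero]
  · simp [Dz_coeff, Polynomial.coeff_X_mul]

lemma Dz_Xpow_mul (m : ℕ) (q : Polynomial (PowerSeries ℚ)) :
    Dz (Polynomial.X ^ m * q) = Polynomial.X ^ m * Dz q := by
  induction m with
  | zero => simp
  | succ m ih =>
      rw [pow_succ, show Polynomial.X ^ m * Polynomial.X * q
          = Polynomial.X * (Polynomial.X ^ m * q) from by ring, Dz_X_mul, ih]
      ring

lemma DL_add (N : ℕ) (r : ℚ) (p q : Polynomial (PowerSeries ℚ)) :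
    DL N r (p + q) = DL N r p + DL N r q := by
  simp only [DL, Dz_add]
  ring

lemma DL_sum (N : ℕ) (r : ℚ) {ι : Type*} (s : Finset ι) (f : ι → Polynomial (PowerSeries ℚ)) :
    DL N r (∑ i ∈ s, f i) = ∑ i ∈ s, DL N r (f i) := by
  have h0 : DL N r 0 = 0 := by simp [DL, Dz, Polynomial.sum_zero_index]
  exact map_sum (AddMonoidHom.mk' (DL N r) (DL_add N r)) f s

lemma DL_term (N : ℕ) (r : ℚ) (f : PowerSeries ℚ) (m : ℕ) (q : Polynomial (PowerSeries ℚ)) :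
    DL N r (Polynomial.X ^ m * Polynomial.C f * q)
      = Polynomial.X ^ (m+1) * Polynomial.C (Dq f) * q
        + Polynomial.X ^ (m+1) * Polynomial.C f * Dz q
        + Polynomial.X ^ m * Polynomial.C (Lpow N r 1 * f) * q := by
  rw [DL, show Polynomial.X ^ m * Polynomial.C f * q
      = Polynomial.X ^ m * (Polynomial.C f * q) from by ring,
    Dz_Xpow_mul, Dz_C_mul, map_mul]
  ring


/-- Term of the expansion. -/
def Tm (N : ℕ) (r : ℚ) (n m j : ℕ) (p : Polynomial (PowerSeries ℚ)) : Polynomial (PowerSeries ℚ) :=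
  Polynomial.X ^ m * Polynomial.C (Lpow N r 1 ^ (n - m) *
    Polynomial.aeval (Xser N r) (cpoly N n m j)) * Dz^[m - j] p

def U1 (N : ℕ) (r : ℚ) (n m j : ℕ) (p : Polynomial (PowerSeries ℚ)) : Polynomial (PowerSeries ℚ) :=
  Polynomial.X ^ (m+1) * Polynomial.C (Lpow N r 1 ^ (n - m) *
    Polynomial.aeval (Xser N r)
      (Polynomial.C (((n:ℚ) - (m:ℚ))/(N:ℚ)) * (Polynomial.X * cpoly N n m j)
        + Polynomial.X * (1 - Polynomial.X) * (cpoly N n m j).derivative)) * Dz^[m - j] p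

def U2 (N : ℕ) (r : ℚ) (n m j : ℕ) (p : Polynomial (PowerSeries ℚ)) : Polynomial (PowerSeries ℚ) :=
  Polynomial.X ^ (m+1) * Polynomial.C (Lpow N r 1 ^ (n - m) *
    Polynomial.aeval (Xser N r) (cpoly N n m j)) * Dz^[(m+1) - j] p

def U3 (N : ℕ) (r : ℚ) (n m j : ℕ) (p : Polynomial (PowerSeries ℚ)) : Polynomial (PowerSeries ℚ) :=
  Polynomial.X ^ m * Polynomial.C (Lpow N r 1 ^ ((n+1) - m) *
    Polynomial.aeval (Xser N r) (cpoly N n m j)) * Dz^[m - j] p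

lemma U2_top (N : ℕ) (r : ℚ) (n m : ℕ) (p : Polynomial (PowerSeries ℚ)) :
    U2 N r n m (m+1) p = 0 := by
  simp [U2, cpoly_j_gt N n m (m+1) (by omega)]

lemma U3_top (N : ℕ) (r : ℚ) (n j : ℕ) (p : Polynomial (PowerSeries ℚ)) :
    U3 N r n (n+1) j p = 0 := by
  simp [U3, cpoly_m_gt N n (n+1) j (by omega)]

lemma DL_Tm (N : ℕ) (hN : 1 ≤ N) (r : ℚ) (n m j : ℕ) (hm : m ≤ n) (hj : j ≤ m)
    (p : Polynomial (PowerSeries ℚ)) :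
    DL N r (Tm N r n m j p) = U1 N r n m j p + U2 N r n m j p + U3 N r n m j p := by
  have hcast : ((n - m : ℕ) : ℚ) = (n:ℚ) - (m:ℚ) := by
    rw [Nat.cast_sub hm]
  have hDq : Dq (Lpow N r 1 ^ (n - m) * Polynomial.aeval (Xser N r) (cpoly N n m j))
      = Lpow N r 1 ^ (n - m) * Polynomial.aeval (Xser N r)
          (Polynomial.C (((n:ℚ) - (m:ℚ))/(N:ℚ)) * (Polynomial.X * cpoly N n m j)
            + Polynomial.X * (1 - Polynomial.X) * (cpoly N n m j).derivative) := by
    rw [Dq_mul, Dq_L_pow N hN r, Dq_aeval, Dq_Xser N r hN, hcast]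
    simp only [map_add, map_mul, map_sub, map_one, Polynomial.aeval_X, Polynomial.aeval_C,
      PowerSeries.algebraMap_apply, Algebra.algebraMap_self, RingHom.id_apply]
    ring
  rw [Tm, DL_term, hDq]
  rw [show Dz (Dz^[m - j] p) = Dz^[(m+1) - j] p from by
    rw [show (m+1) - j = (m - j) + 1 from by omega, Function.iterate_succ_apply']]
  rw [show Lpow N r 1 * (Lpow N r 1 ^ (n - m) * Polynomial.aeval (Xser N r) (cpoly N n m j))
      = Lpow N r 1 ^ ((n+1) - m) * Polynomial.aeval (Xser N r) (cpoly N n m j) from by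
    rw [show (n+1) - m = (n - m) + 1 from by omega, pow_succ]; ring]
  rw [U1, U2, U3]

lemma Tm_succ_zero (N : ℕ) (r : ℚ) (n j : ℕ) (p : Polynomial (PowerSeries ℚ)) :
    Tm N r (n+1) 0 j p = U3 N r n 0 j p := by
  simp [Tm, U3, cpoly]

lemma Tm_succ_split0 (N : ℕ) (r : ℚ) (n m : ℕ) (p : Polynomial (PowerSeries ℚ)) :
    Tm N r (n+1) (m+1) 0 p = U3 N r n (m+1) 0 p + U2 N r n m 0 p := by
  simp only [Tm, U2, U3, cpoly, Nat.add_sub_add_right, Nat.sub_zero, map_add, mul_add, add_mul]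

lemma Tm_succ_split (N : ℕ) (r : ℚ) (n m j : ℕ) (p : Polynomial (PowerSeries ℚ)) :
    Tm N r (n+1) (m+1) (j+1) p
      = U3 N r n (m+1) (j+1) p + U2 N r n m (j+1) p + U1 N r n m j p := by
  simp only [Tm, U1, U2, U3, cpoly, Nat.add_sub_add_right, map_add, mul_add, add_mul]
  ring


lemma step (N : ℕ) (hN : 1 ≤ N) (r : ℚ) (n : ℕ) (p : Polynomial (PowerSeries ℚ)) :
    ∑ m ∈ range (n+1), ∑ j ∈ range (m+1), DL N r (Tm N r n m j p)
      = ∑ m ∈ range (n+1+1), ∑ j ∈ range (m+1), Tm N r (n+1) m j p := by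
  have hU2 : ∀ m : ℕ, ∑ j ∈ range (m+1), U2 N r n m j p
      = ∑ j ∈ range (m+1), U2 N r n m (j+1) p + U2 N r n m 0 p := by
    intro m
    rw [← Finset.sum_range_succ' (fun j => U2 N r n m j p) (m+1),
      Finset.sum_range_succ (fun j => U2 N r n m j p) (m+1), U2_top, add_zero]
  have hU3 : ∑ m ∈ range (n+1), ∑ j ∈ range (m+1), U3 N r n m j p
      = ∑ m ∈ range (n+1), (∑ j ∈ range (m+1), U3 N r n (m+1) (j+1) p + U3 N r n (m+1) 0 p)
        + U3 N r n 0 0 p := by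
    have h1 : ∀ m : ℕ, ∑ j ∈ range (m+1+1), U3 N r n (m+1) j p
        = ∑ j ∈ range (m+1), U3 N r n (m+1) (j+1) p + U3 N r n (m+1) 0 p :=
      fun m => Finset.sum_range_succ' (fun j => U3 N r n (m+1) j p) (m+1)
    have h2 : (∑ m ∈ range (n+1+1), ∑ j ∈ range (m+1), U3 N r n m j p)
        = ∑ m ∈ range (n+1), ∑ j ∈ range (m+1+1), U3 N r n (m+1) j p
          + ∑ j ∈ range 1, U3 N r n 0 j p :=
      Finset.sum_range_succ' (fun m => ∑ j ∈ range (m+1), U3 N r n m j p) (n+1)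
    have h3 : (∑ m ∈ range (n+1+1), ∑ j ∈ range (m+1), U3 N r n m j p)
        = ∑ m ∈ range (n+1), ∑ j ∈ range (m+1), U3 N r n m j p := by
      rw [Finset.sum_range_succ (fun m => ∑ j ∈ range (m+1), U3 N r n m j p) (n+1),
        Finset.sum_eq_zero (fun j _ => U3_top N r n j p), add_zero]
    rw [← h3, h2, Finset.sum_range_one]
    exact congrArg (fun t => t + U3 N r n 0 0 p) (Finset.sum_congr rfl fun m _ => h1 m)
  calc ∑ m ∈ range (n+1), ∑ j ∈ range (m+1), DL N r (Tm N r n m j p)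
      = ∑ m ∈ range (n+1), (∑ j ∈ range (m+1), U1 N r n m j p
          + ∑ j ∈ range (m+1), U2 N r n m j p + ∑ j ∈ range (m+1), U3 N r n m j p) := by
        refine Finset.sum_congr rfl fun m hm => ?_
        rw [← Finset.sum_add_distrib, ← Finset.sum_add_distrib]
        refine Finset.sum_congr rfl fun j hj => ?_
        simp only [Finset.mem_range] at hm hj
        exact DL_Tm N hN r n m j (by omega) (by omega) p
    _ = (∑ m ∈ range (n+1), (∑ j ∈ range (m+1), U1 N r n m j p
          + ∑ j ∈ range (m+1), U2 N r n m j p))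
        + ∑ m ∈ range (n+1), ∑ j ∈ range (m+1), U3 N r n m j p := by
        rw [← Finset.sum_add_distrib]
    _ = (∑ m ∈ range (n+1), (∑ j ∈ range (m+1), U1 N r n m j p
          + (∑ j ∈ range (m+1), U2 N r n m (j+1) p + U2 N r n m 0 p)))
        + (∑ m ∈ range (n+1), (∑ j ∈ range (m+1), U3 N r n (m+1) (j+1) p + U3 N r n (m+1) 0 p)
            + U3 N r n 0 0 p) := by
        rw [hU3]
        congr 1
        exact Finset.sum_congr rfl fun m _ => by rw [hU2]
    _ = ∑ m ∈ range (n+1),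
          ((∑ j ∈ range (m+1), (U3 N r n (m+1) (j+1) p + U2 N r n m (j+1) p + U1 N r n m j p))
            + (U3 N r n (m+1) 0 p + U2 N r n m 0 p))
        + U3 N r n 0 0 p := by
        rw [← add_assoc, ← Finset.sum_add_distrib]
        congr 1
        refine Finset.sum_congr rfl fun m _ => ?_
        rw [Finset.sum_add_distrib, Finset.sum_add_distrib]
        abel
    _ = ∑ m ∈ range (n+1), ∑ j ∈ range (m+1+1), Tm N r (n+1) (m+1) j p
        + ∑ j ∈ range 1, Tm N r (n+1) 0 j p := by
        congr 1
        · refine Finset.sum_congr rfl fun m _ => ?_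
          rw [Finset.sum_range_succ' (fun j => Tm N r (n+1) (m+1) j p) (m+1)]
          rw [Tm_succ_split0]
          congr 1
          exact Finset.sum_congr rfl fun j _ => (Tm_succ_split N r n m j p).symm
        · rw [Finset.sum_range_one, Tm_succ_zero]
    _ = ∑ m ∈ range (n+1+1), ∑ j ∈ range (m+1), Tm N r (n+1) m j p :=
        (Finset.sum_range_succ' (fun m => ∑ j ∈ range (m+1), Tm N r (n+1) m j p) (n+1)).symm

lemma main_formula (N : ℕ) (hN : 1 ≤ N) (r : ℚ) (n : ℕ) (p : Polynomial (PowerSeries ℚ)) :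
    (DL N r)^[n] p = ∑ m ∈ range (n+1), ∑ j ∈ range (m+1), Tm N r n m j p := by
  induction n with
  | zero => simp [Tm, cpoly]
  | succ n ih =>
      rw [Function.iterate_succ_apply', ih, DL_sum]
      rw [show (∑ m ∈ range (n+1), DL N r (∑ j ∈ range (m+1), Tm N r n m j p))
          = ∑ m ∈ range (n+1), ∑ j ∈ range (m+1), DL N r (Tm N r n m j p) from
        Finset.sum_congr rfl fun m _ => DL_sum N r _ _]
      exact step N hN r n p



theorem statement16 (N : ℕ) (hN : 1 ≤ N) (r : ℚ) (hr : r ≠ 0) (n : ℕ) :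
    ∃ c : ℕ → ℕ → Polynomial ℚ,
      (∀ m : ℕ, m ≤ n → c m 0 = Polynomial.C ((n.choose m : ℕ) : ℚ)) ∧
      (∀ m j : ℕ, m ≤ n → 1 ≤ j → j ≤ m →
        Polynomial.X ∣ c m j ∧ (c m j).natDegree ≤ j) ∧
      ∀ p : Polynomial (PowerSeries ℚ),
        (DL N r)^[n] p =
          ∑ m ∈ range (n + 1),
            Polynomial.X ^ m * Polynomial.C ((Lpow N r 1) ^ (n - m)) *
              ∑ j ∈ range (m + 1),
                Polynomial.C (Polynomial.aeval (Xser N r) (c m j)) * Dz^[m - j] p := by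
  refine ⟨fun m j => cpoly N n m j, ?_, ?_, ?_⟩
  · intro m _
    exact cpoly_zero_right N n m
  · intro m j _ hj _
    exact ⟨(cpoly_prop N n m j).2 hj, (cpoly_prop N n m j).1⟩
  · intro p
    rw [main_formula N hN r n p]
    refine Finset.sum_congr rfl fun m _ => ?_
    rw [Finset.mul_sum]
    refine Finset.sum_congr rfl fun j _ => ?_
    rw [Tm, map_mul]
    ring

end
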